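/- Assume d is odd. A unit vector |b⟩ ∈ ℂ^d⊗ℂ^d is the fiducial vector of a WH-type basis if and only if the operator B₀ = ∑_{i=-(d-1)/2}^{(d-1)/2} |b_i⁰⟩⟨b_i⁰|, where |b_i⁰⟩ = K_i P_i |b⟩, restricted to H₀ equals (1/d)·I; equivalently, the vectors K_i P_i|b⟩ ∈ H₀ are pairwise orthogonal, each of norm 1/√d. Here P_i is the projector onto the invariant subspace H_i and K_i is the self-adjoint involutive unitary swapping H_i with H₀ via the intertwining isometries, commuting with all T_a⊗T_a. -/

import Mathlib

open Matrix Complex BigOperators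

noncomputable def ww (d : ℕ) : ℂ := Complex.exp (2 * Real.pi * Complex.I / d)

noncomputable def tt (d : ℕ) : ℂ := Complex.exp (2 * Real.pi * Complex.I * (d + 1) / (2 * d))

/-- Displacement operator `T_a = τ^{a₁a₂} S^{a₁} C^{a₂}` as a concrete matrix. -/
noncomputable def T (d : ℕ) (a : ℤ × ℤ) : Matrix (ZMod d) (ZMod d) ℂ :=
  Matrix.of fun i j => tt d ^ (a.1 * a.2) *
    (if i = j + (a.1 : ZMod d) then ww d ^ (a.2 * (j.val : ℤ)) else 0)

def fz {d : ℕ} (a : Fin d × Fin d) : ℤ × ℤ := (((a.1 : ℕ) : ℤ), ((a.2 : ℕ) : ℤ))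

noncomputable def dotc {α : Type*} [Fintype α] (v w : α → ℂ) : ℂ := ∑ p, star (v p) * w p

/-- Orthogonal projection onto the symmetric subspace of `ℂ^d ⊗ ℂ^d`. -/
noncomputable def Psym (d : ℕ) : Matrix (ZMod d × ZMod d) (ZMod d × ZMod d) ℂ :=
  Matrix.of fun p q => (1 / 2 : ℂ) * ((if p = q then 1 else 0) + (if p = (q.2, q.1) then 1 else 0))

/-- `T_a ⊗ T_a` -/
noncomputable def TT (d : ℕ) (a : ℤ × ℤ) : Matrix (ZMod d × ZMod d) (ZMod d × ZMod d) ℂ :=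
  Matrix.kroneckerMap (· * ·) (T d a) (T d a)

/-- Discrete Fourier transform matrix. -/
noncomputable def Fdft (d : ℕ) : Matrix (ZMod d) (ZMod d) ℂ :=
  Matrix.of fun i j => ((1 / Real.sqrt d : ℝ) : ℂ) * ww d ^ (i.val * j.val)

/-- The vector `|0⟩ ⊗ F|0⟩`. -/
noncomputable def b0 (d : ℕ) : ZMod d × ZMod d → ℂ :=
  fun p => (if p.1 = 0 then 1 else 0) * Fdft d p.2 0

/-- Partial trace over the first factor of `|v⟩⟨v|`. -/
noncomputable def ptrace1 (d : ℕ) [NeZero d] (v : ZMod d × ZMod d → ℂ) :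
    Matrix (ZMod d) (ZMod d) ℂ :=
  Matrix.of fun j l => ∑ i, v (i, j) * star (v (i, l))

/-- tensor square of a vector -/
noncomputable def tp {d : ℕ} (f : ZMod d → ℂ) : ZMod d × ZMod d → ℂ :=
  fun p => f p.1 * f p.2

/-- `b` is a fiducial vector of a WH-type basis. -/
def IsWHFiducial (d : ℕ) [NeZero d] (b : ZMod d × ZMod d → ℂ) : Prop :=
  dotc b b = 1 ∧ ∀ a : Fin d × Fin d, ((a.1 : ℕ), (a.2 : ℕ)) ≠ (0, 0) →
    dotc b ((TT d (fz a)).mulVec b) = 0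

noncomputable def Cm (d : ℕ) : Matrix (ZMod d) (ZMod d) ℂ :=
  Matrix.of fun i j => if i = j then ww d ^ (i.val) else 0

noncomputable def Sm (d : ℕ) : Matrix (ZMod d) (ZMod d) ℂ :=
  Matrix.of fun i j => if i = j + 1 then 1 else 0

/-- `(1/√2)(|j⟩|j+i⟩ ± |j+i⟩|j⟩)` (up to normalization), sign `s`. -/
noncomputable def symVec (d : ℕ) (i s : ℤ) (j : ZMod d) : ZMod d × ZMod d → ℂ :=
  fun p => (if p = (j, j + (i : ZMod d)) then 1 else 0) +
    (s : ℂ) * (if p = (j + (i : ZMod d), j) then 1 else 0)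

/-- The invariant subspace `H_{±i}`. -/
noncomputable def Hsub (d : ℕ) (i s : ℤ) : Submodule ℂ (ZMod d × ZMod d → ℂ) :=
  Submodule.span ℂ (Set.range (symVec d i s))

/-- The swap operator on `ℂ^d ⊗ ℂ^d`. -/
def swapL (d : ℕ) : (ZMod d × ZMod d → ℂ) →ₗ[ℂ] (ZMod d × ZMod d → ℂ) where
  toFun v := fun p => v (p.2, p.1)
  map_add' _ _ := rfl
  map_smul' _ _ := rfl

/-- `H_t` for `t ∈ [-(d-1)/2 .. (d-1)/2]` (d odd). -/
noncomputable def Hodd (d : ℕ) (t : ℤ) : Submodule ℂ (ZMod d × ZMod d → ℂ) :=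
  if 0 ≤ t then Hsub d t 1 else Hsub d (-t) (-1)


section Basics
variable (d : ℕ) [NeZero d]
set_option linter.unusedSectionVars false

lemma ww_ne_zero : ww d ≠ 0 := Complex.exp_ne_zero _

lemma tt_ne_zero : tt d ≠ 0 := Complex.exp_ne_zero _

lemma ww_prim : IsPrimitiveRoot (ww d) d :=
  Complex.isPrimitiveRoot_exp d (NeZero.ne d)

lemma ww_zpow_eq_one_iff (c : ℤ) : ww d ^ c = 1 ↔ (d : ℤ) ∣ c :=
  (ww_prim d).zpow_eq_one_iff_dvd c

lemma ww_zpow_d : ww d ^ (d : ℤ) = 1 := by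
  rw [ww_zpow_eq_one_iff]

variable {d}

lemma char_sum_range (hd : Odd d) (c : ℤ) :
    ∑ k ∈ Finset.range d, ww d ^ (2 * c * (k : ℤ)) = if (d : ℤ) ∣ c then (d : ℂ) else 0 := by
  have hx : ∀ k : ℕ, ww d ^ (2 * c * (k : ℤ)) = (ww d ^ (2 * c)) ^ k := by
    intro k
    rw [← zpow_natCast ((ww d) ^ (2*c)), ← _root_.zpow_mul]
  simp only [hx]
  by_cases h : (d : ℤ) ∣ c
  · have : ww d ^ (2 * c) = 1 := by
      rw [ww_zpow_eq_one_iff]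
      exact Dvd.dvd.mul_left h 2
    simp [this, h]
  · have hne : ww d ^ (2 * c) ≠ 1 := by
      intro h1
      rw [ww_zpow_eq_one_iff] at h1
      have hdvd := h1
      have hcop : IsCoprime (d : ℤ) 2 := by
        rw [Int.isCoprime_iff_gcd_eq_one]
        have h2 : Nat.gcd d 2 = 1 := Nat.coprime_two_right.mpr hd
        have hg : Int.gcd (d : ℤ) ((2 : ℕ) : ℤ) = Nat.gcd d 2 := Int.gcd_natCast_natCast d 2
        simpa using hg.trans h2
      exact h (hcop.dvd_of_dvd_mul_left hdvd)
    rw [geom_sum_eq hne]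
    have : (ww d ^ (2 * c)) ^ d = 1 := by
      rw [← zpow_natCast ((ww d) ^ (2*c)), ← _root_.zpow_mul, mul_comm, _root_.zpow_mul, ww_zpow_d, _root_.one_zpow]
    simp [this, h]

lemma char_sum_zmod (hd : Odd d) (c : ℤ) :
    ∑ l : ZMod d, ww d ^ (2 * c * (l.val : ℤ)) = if (d : ℤ) ∣ c then (d : ℂ) else 0 := by
  rw [← char_sum_range hd c]
  apply Finset.sum_nbij' (fun l : ZMod d => l.val) (fun k : ℕ => (k : ZMod d))
  · intro a _; exact Finset.mem_range.mpr (ZMod.val_lt a)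
  · intro a _; exact Finset.mem_univ _
  · intro a _; exact ZMod.natCast_rightInverse a
  · intro a ha; exact ZMod.val_cast_of_lt (Finset.mem_range.mp ha)
  · intro a _; rfl

end Basics
section DotC
variable {α : Type*} [Fintype α]

lemma dotc_eq_dot (v w : α → ℂ) : dotc v w = dotProduct (star v) w := rfl

lemma dotc_add_right (v w w' : α → ℂ) : dotc v (w + w') = dotc v w + dotc v w' := by
  simp [dotc, mul_add, Finset.sum_add_distrib]

lemma dotc_add_left (v v' w : α → ℂ) : dotc (v + v') w = dotc v w + dotc v' w := by
  simp [dotc, add_mul, Finset.sum_add_distrib]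

lemma dotc_smul_right (c : ℂ) (v w : α → ℂ) : dotc v (c • w) = c * dotc v w := by
  simp [dotc, Finset.mul_sum]
  exact Finset.sum_congr rfl fun x _ => by ring

lemma dotc_smul_left (c : ℂ) (v w : α → ℂ) : dotc (c • v) w = star c * dotc v w := by
  simp [dotc, Finset.mul_sum]
  exact Finset.sum_congr rfl fun x _ => by ring

lemma dotc_zero_right (v : α → ℂ) : dotc v 0 = 0 := by simp [dotc]

lemma dotc_zero_left (v : α → ℂ) : dotc 0 v = 0 := by simp [dotc]

lemma dotc_sum_right {β : Type*} (s : Finset β) (v : α → ℂ) (f : β → α → ℂ) :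
    dotc v (∑ i ∈ s, f i) = ∑ i ∈ s, dotc v (f i) := by
  simp [dotc, Finset.mul_sum]
  rw [Finset.sum_comm]

lemma dotc_sum_left {β : Type*} (s : Finset β) (v : α → ℂ) (f : β → α → ℂ) :
    dotc (∑ i ∈ s, f i) v = ∑ i ∈ s, dotc (f i) v := by
  simp [dotc, Finset.sum_mul]
  rw [Finset.sum_comm]

lemma dotc_self_eq_zero {v : α → ℂ} (h : dotc v v = 0) : v = 0 := by
  have h2 : ∑ p, Complex.normSq (v p) = 0 := by
    have := h
    simp only [dotc] at this
    have : ((∑ p, Complex.normSq (v p) : ℝ) : ℂ) = 0 := by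
      push_cast
      rw [← this]
      congr 1
      funext p
      rw [Complex.normSq_eq_conj_mul_self]
      rfl
    exact_mod_cast this
  funext p
  have hnn : ∀ p : α, 0 ≤ Complex.normSq (v p) := fun p => Complex.normSq_nonneg _
  have := (Finset.sum_eq_zero_iff_of_nonneg (fun p _ => hnn p)).mp h2 p (Finset.mem_univ p)
  simpa using Complex.normSq_eq_zero.mp this

lemma dotc_mulVec_left {M : Matrix α α ℂ} (v w : α → ℂ) :
    dotc (M.mulVec v) w = dotc v ((Mᴴ).mulVec w) := by
  rw [dotc_eq_dot, dotc_eq_dot, Matrix.star_mulVec, Matrix.dotProduct_mulVec]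

end DotC

section SymVecFacts
variable {d : ℕ} [NeZero d]
set_option linter.unusedSectionVars false

lemma sum_ind {α : Type*} [Fintype α] [DecidableEq α] (x y : α) (c c' : ℂ) :
    ∑ p, (if p = x then c else 0) * (if p = y then c' else 0) =
      if x = y then c * c' else 0 := by
  rw [Finset.sum_eq_single x]
  · by_cases h : x = y <;> simp [h]
  · intro q _ hq; simp [hq]
  · intro h; exact absurd (Finset.mem_univ x) h

lemma star_symVec (i s : ℤ) (j : ZMod d) (p : ZMod d × ZMod d) :
    star (symVec d i s j p) = symVec d i s j p := by
  simp only [symVec]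
  rw [star_add, star_mul']
  congr 1
  · split_ifs <;> simp
  · rw [show star ((s:ℂ)) = (s:ℂ) by simp]
    congr 1
    split_ifs <;> simp

lemma dotc_symVec_eq (i s i' s' : ℤ) (j j' : ZMod d) :
    dotc (symVec d i s j) (symVec d i' s' j') =
      (if ((j : ZMod d), j + (i:ZMod d)) = (j', j' + (i':ZMod d)) then 1 else 0)
      + (s' : ℂ) * (if ((j : ZMod d), j + (i:ZMod d)) = (j' + (i':ZMod d), j') then 1 else 0)
      + (s : ℂ) * (if (j + (i:ZMod d), (j : ZMod d)) = (j', j' + (i':ZMod d)) then 1 else 0)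
      + (s : ℂ) * (s' : ℂ) * (if (j + (i:ZMod d), (j : ZMod d)) = (j' + (i':ZMod d), j') then 1 else 0) := by
  unfold dotc
  simp only [star_symVec]
  have expand : ∀ p : ZMod d × ZMod d, symVec d i s j p * symVec d i' s' j' p =
      (if p = ((j : ZMod d), j + (i:ZMod d)) then 1 else 0) * (if p = (j', j' + (i':ZMod d)) then 1 else 0)
      + (if p = ((j : ZMod d), j + (i:ZMod d)) then 1 else 0) * (if p = (j' + (i':ZMod d), j') then (s':ℂ) else 0)
      + (if p = (j + (i:ZMod d), (j : ZMod d)) then (s:ℂ) else 0) * (if p = (j', j' + (i':ZMod d)) then 1 else 0)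
      + (if p = (j + (i:ZMod d), (j : ZMod d)) then (s:ℂ) else 0) * (if p = (j' + (i':ZMod d), j') then (s':ℂ) else 0) := by
    intro p
    simp only [symVec]
    split_ifs <;> ring
  simp only [expand, Finset.sum_add_distrib, sum_ind]
  split_ifs <;> ring
end SymVecFacts
section Orth
variable {d : ℕ} [NeZero d]
set_option linter.unusedSectionVars false

lemma intCast_zmod_eq_zero_small {x : ℤ} (h1 : -(d:ℤ) < x) (h2 : x < d)
    (h : (x : ZMod d) = 0) : x = 0 := by
  have := (ZMod.intCast_zmod_eq_zero_iff_dvd x d).mp h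
  exact Int.eq_zero_of_abs_lt_dvd this (abs_lt.mpr ⟨h1, h2⟩)

lemma gen_orth (i1 σ1 i2 σ2 : ℤ)
    (h23 : (i1 : ZMod d) + (i2 : ZMod d) ≠ 0)
    (h14 : (i1 : ZMod d) = (i2 : ZMod d) → σ1 * σ2 = -1)
    (j j' : ZMod d) : dotc (symVec d i1 σ1 j) (symVec d i2 σ2 j') = 0 := by
  rw [dotc_symVec_eq]
  have e2 : ((j : ZMod d), j + (i1:ZMod d)) ≠ (j' + (i2:ZMod d), j') := by
    intro h
    rw [Prod.mk.injEq] at h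
    apply h23
    have : j + ((i1:ZMod d) + (i2:ZMod d)) = j + 0 := by
      rw [add_zero, ← add_assoc, h.2, ← h.1]
    exact add_left_cancel this
  have e3 : (j + (i1:ZMod d), (j : ZMod d)) ≠ (j', j' + (i2:ZMod d)) := by
    intro h
    rw [Prod.mk.injEq] at h
    apply h23
    have : j + ((i1:ZMod d) + (i2:ZMod d)) = j + 0 := by
      rw [add_zero, ← add_assoc, h.1, ← h.2]
    exact add_left_cancel this
  rw [if_neg e2, if_neg e3]
  by_cases hc : (i1 : ZMod d) = (i2 : ZMod d)
  · have e1 : (((j : ZMod d), j + (i1:ZMod d)) = (j', j' + (i2:ZMod d))) ↔ j = j' := by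
      rw [Prod.mk.injEq]
      constructor
      · exact fun h => h.1
      · intro h; exact ⟨h, by rw [h, hc]⟩
    have e4 : ((j + (i1:ZMod d), (j : ZMod d)) = (j' + (i2:ZMod d), j')) ↔ j = j' := by
      rw [Prod.mk.injEq]
      constructor
      · exact fun h => h.2
      · intro h; exact ⟨by rw [h, hc], h⟩
    rw [if_congr e1 rfl rfl, if_congr e4 rfl rfl]
    have hσ : (σ1 : ℂ) * (σ2 : ℂ) = -1 := by
      have h' := h14 hc
      have : ((σ1 * σ2 : ℤ) : ℂ) = ((-1 : ℤ) : ℂ) := by rw [h']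
      push_cast at this
      push_cast
      linear_combination this
    split_ifs <;> simp [hσ] <;> ring
  · have e1 : (((j : ZMod d), j + (i1:ZMod d)) ≠ (j', j' + (i2:ZMod d))) := by
      intro h
      rw [Prod.mk.injEq] at h
      exact hc (by have := h.2; rw [h.1] at this; exact add_left_cancel this)
    have e4 : ((j + (i1:ZMod d), (j : ZMod d)) ≠ (j' + (i2:ZMod d), j')) := by
      intro h
      rw [Prod.mk.injEq] at h
      exact hc (by have := h.1; rw [h.2] at this; exact add_left_cancel this)
    rw [if_neg e1, if_neg e4]
    ring

lemma span_orth {S T : Set (ZMod d × ZMod d → ℂ)}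
    (h : ∀ x ∈ S, ∀ y ∈ T, dotc x y = 0) :
    ∀ v ∈ Submodule.span ℂ S, ∀ w ∈ Submodule.span ℂ T, dotc v w = 0 := by
  have inner : ∀ x ∈ S, ∀ w ∈ Submodule.span ℂ T, dotc x w = 0 := by
    intro x hx w hw
    induction hw using Submodule.span_induction with
    | mem y hy => exact h x hx y hy
    | zero => exact dotc_zero_right x
    | add y z _ _ hy hz => rw [dotc_add_right, hy, hz, add_zero]
    | smul c y _ hy => rw [dotc_smul_right, hy, mul_zero]
  intro v hv
  induction hv using Submodule.span_induction with
  | mem x hx => exact inner x hx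
  | zero => intro w hw; exact dotc_zero_left w
  | add y z _ _ hy hz => intro w hw; rw [dotc_add_left, hy w hw, hz w hw, add_zero]
  | smul c y _ hy => intro w hw; rw [dotc_smul_left, hy w hw, mul_zero]

/-- Orthogonality of distinct `Hodd` subspaces. -/
lemma Hodd_orth (hd : Odd d) {s t : ℤ}
    (hs : s ∈ Finset.Icc (-(((d : ℤ) - 1) / 2)) (((d : ℤ) - 1) / 2))
    (ht : t ∈ Finset.Icc (-(((d : ℤ) - 1) / 2)) (((d : ℤ) - 1) / 2))
    (hst : s ≠ t) {v w : ZMod d × ZMod d → ℂ}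
    (hv : v ∈ Hodd d s) (hw : w ∈ Hodd d t) : dotc v w = 0 := by
  rw [Finset.mem_Icc] at hs ht
  obtain ⟨m, hm⟩ := hd
  have hdm : (d : ℤ) = 2 * m + 1 := by exact_mod_cast hm
  have hmval : ((d : ℤ) - 1) / 2 = m := by omega
  rw [hmval] at hs ht
  -- identify generator data
  have key : ∀ (i1 σ1 i2 σ2 : ℤ), Hodd d s = Hsub d i1 σ1 → Hodd d t = Hsub d i2 σ2 →
      0 ≤ i1 → i1 ≤ m → 0 ≤ i2 → i2 ≤ m →
      (i1 + i2 = 0 → False) → (i1 = i2 → σ1 * σ2 = -1) →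
      dotc v w = 0 := by
    intro i1 σ1 i2 σ2 h1 h2 hi1 hi1' hi2 hi2' hsum heq
    rw [h1] at hv; rw [h2] at hw
    refine span_orth ?_ v hv w hw
    rintro x ⟨j, rfl⟩ y ⟨j', rfl⟩
    apply gen_orth
    · intro hz
      have : ((i1 + i2 : ℤ) : ZMod d) = 0 := by push_cast; exact hz
      have := intCast_zmod_eq_zero_small (by omega) (by omega) this
      exact hsum this
    · intro hz
      have : ((i1 - i2 : ℤ) : ZMod d) = 0 := by push_cast; rw [hz]; ring
      have := intCast_zmod_eq_zero_small (by omega) (by omega) this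
      exact heq (by omega)
  by_cases h0s : 0 ≤ s <;> by_cases h0t : 0 ≤ t
  · exact key s 1 t 1 (by simp [Hodd, h0s]) (by simp [Hodd, h0t])
      h0s hs.2 h0t ht.2 (fun h => hst (by omega)) (fun h => absurd (by omega : s = t) hst)
  · exact key s 1 (-t) (-1) (by simp [Hodd, h0s]) (by simp [Hodd, h0t])
      h0s hs.2 (by omega) (by omega) (by omega) (fun _ => by ring)
  · exact key (-s) (-1) t 1 (by simp [Hodd, h0s]) (by simp [Hodd, h0t])
      (by omega) (by omega) h0t ht.2 (by omega) (fun _ => by ring)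
  · exact key (-s) (-1) (-t) (-1) (by simp [Hodd, h0s]) (by simp [Hodd, h0t])
      (by omega) (by omega) (by omega) (by omega) (fun h => hst (by omega))
      (fun h => absurd (by omega : s = t) hst)

end Orth
section TTact
variable {d : ℕ} [NeZero d]
set_option linter.unusedSectionVars false
set_option maxHeartbeats 1000000

lemma TT_mulVec_symVec (a : ℤ × ℤ) (i s : ℤ) (j : ZMod d) :
    (TT d a).mulVec (symVec d i s j) =
      (tt d ^ (a.1 * a.2) * tt d ^ (a.1 * a.2) * ww d ^ (a.2 * (j.val : ℤ)) *
        ww d ^ (a.2 * (((j + (i : ZMod d)).val : ℕ) : ℤ))) • symVec d i s (j + (a.1 : ZMod d)) := by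
  funext p
  obtain ⟨p1, p2⟩ := p
  simp only [Matrix.mulVec, dotProduct, symVec, TT, T, Matrix.kroneckerMap,
    Matrix.of_apply, Pi.smul_apply, smul_eq_mul, Fintype.sum_prod_type, Prod.mk.injEq,
    ite_and, mul_ite, ite_mul, mul_one, mul_zero, zero_mul, mul_add, add_mul,
    Finset.sum_add_distrib, Finset.sum_ite_eq', Finset.mem_univ, if_true, Finset.sum_const_zero,
    add_zero, zero_add]
  simp only [add_right_comm]
  split_ifs <;> first | ring | tauto
end TTact
section Invariance
variable {d : ℕ} [NeZero d]
set_option linter.unusedSectionVars false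

lemma Hsub_TT_invariant (a : ℤ × ℤ) (i s : ℤ) :
    ∀ v ∈ Hsub d i s, (TT d a).mulVec v ∈ Hsub d i s := by
  intro v hv
  induction hv using Submodule.span_induction with
  | mem x hx =>
    obtain ⟨j, rfl⟩ := hx
    rw [TT_mulVec_symVec]
    exact Submodule.smul_mem _ _ (Submodule.subset_span ⟨j + (a.1 : ZMod d), rfl⟩)
  | zero => rw [Matrix.mulVec_zero]; exact Submodule.zero_mem _
  | add x y _ _ hx hy => rw [Matrix.mulVec_add]; exact Submodule.add_mem _ hx hy
  | smul c x _ hx => rw [Matrix.mulVec_smul]; exact Submodule.smul_mem _ _ hx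

lemma Hodd_TT_invariant (a : ℤ × ℤ) (t : ℤ) :
    ∀ v ∈ Hodd d t, (TT d a).mulVec v ∈ Hodd d t := by
  unfold Hodd
  split_ifs <;> exact Hsub_TT_invariant a _ _

lemma Hodd_zero_diag {v : ZMod d × ZMod d → ℂ} (hv : v ∈ Hodd d 0) :
    ∀ p : ZMod d × ZMod d, p.1 ≠ p.2 → v p = 0 := by
  have h0 : Hodd d 0 = Hsub d 0 1 := by simp [Hodd]
  rw [h0, Hsub] at hv
  induction hv using Submodule.span_induction with
  | mem x hx =>
    obtain ⟨j, rfl⟩ := hx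
    intro p hp
    have hne : p ≠ (j, j) := by
      intro h; apply hp; rw [h]
    simp [symVec, hne]
  | zero => intro p _; rfl
  | add x y _ _ hx hy => intro p hp; simp [Pi.add_apply, hx p hp, hy p hp]
  | smul c x _ hx => intro p hp; simp [Pi.smul_apply, hx p hp]

/-- a Hermitian idempotent with range `Hodd d t` fixes `Hodd d t`. -/
lemma proj_fix {Pt : Matrix (ZMod d × ZMod d) (ZMod d × ZMod d) ℂ} {t : ℤ}
    (hPP : Pt * Pt = Pt)
    (hrange : LinearMap.range (Matrix.mulVecLin Pt) = Hodd d t) :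
    ∀ v ∈ Hodd d t, Pt.mulVec v = v := by
  intro v hv
  rw [← hrange] at hv
  obtain ⟨w, rfl⟩ := hv
  show Pt.mulVec (Pt.mulVec w) = Pt.mulVec w
  rw [Matrix.mulVec_mulVec, hPP]

lemma proj_kill (hd : Odd d) {Pt : Matrix (ZMod d × ZMod d) (ZMod d × ZMod d) ℂ} {s t : ℤ}
    (hPH : Ptᴴ = Pt) (hPP : Pt * Pt = Pt)
    (hrange : LinearMap.range (Matrix.mulVecLin Pt) = Hodd d t)
    (hs : s ∈ Finset.Icc (-(((d : ℤ) - 1) / 2)) (((d : ℤ) - 1) / 2))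
    (ht : t ∈ Finset.Icc (-(((d : ℤ) - 1) / 2)) (((d : ℤ) - 1) / 2))
    (hst : s ≠ t) :
    ∀ v ∈ Hodd d s, Pt.mulVec v = 0 := by
  intro v hv
  have hy : Pt.mulVec v ∈ Hodd d t := by
    rw [← hrange]; exact ⟨v, rfl⟩
  apply dotc_self_eq_zero
  rw [dotc_mulVec_left, hPH, Matrix.mulVec_mulVec, hPP]
  exact Hodd_orth hd hs ht hst hv hy

end Invariance
section Decomp
variable {d : ℕ} [NeZero d]
set_option linter.unusedSectionVars false
set_option maxHeartbeats 1000000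

/-- the `Hodd d t` component of `v` -/
noncomputable def cp (d : ℕ) [NeZero d] (t : ℤ) (v : ZMod d × ZMod d → ℂ) :
    ZMod d × ZMod d → ℂ :=
  ∑ j : ZMod d, ((1/2 : ℂ) * (v (j, j + ((|t| : ℤ) : ZMod d)) +
      (Int.sign t : ℂ) * v (j + ((|t| : ℤ) : ZMod d), j))) •
    (if 0 ≤ t then symVec d t 1 j else symVec d (-t) (-1) j)

lemma cp_mem (t : ℤ) (v : ZMod d × ZMod d → ℂ) : cp d t v ∈ Hodd d t := by
  unfold cp Hodd
  by_cases ht : 0 ≤ t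
  · rw [if_pos ht]
    refine Submodule.sum_mem _ fun j _ => Submodule.smul_mem _ _ ?_
    rw [if_pos ht]
    exact Submodule.subset_span ⟨j, rfl⟩
  · rw [if_neg ht]
    refine Submodule.sum_mem _ fun j _ => Submodule.smul_mem _ _ ?_
    rw [if_neg ht]
    exact Submodule.subset_span ⟨j, rfl⟩

lemma sum_scaled_symVec (i : ℤ) (σ : ℂ) (C : ZMod d → ℂ) (p1 p2 : ZMod d) :
    ∑ j : ZMod d, C j * ((if (p1,p2) = ((j : ZMod d), j + (i : ZMod d)) then (1:ℂ) else 0) +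
        σ * (if (p1,p2) = (j + (i:ZMod d), (j : ZMod d)) then 1 else 0))
    = (if p2 = p1 + (i:ZMod d) then C p1 else 0) +
      σ * (if p1 = p2 + (i:ZMod d) then C p2 else 0) := by
  have h1 : ∑ j : ZMod d, C j * (if (p1,p2) = ((j : ZMod d), j + (i:ZMod d)) then (1:ℂ) else 0)
      = (if p2 = p1 + (i:ZMod d) then C p1 else 0) := by
    rw [Finset.sum_eq_single p1]
    · by_cases h : p2 = p1 + (i:ZMod d) <;> simp [Prod.mk.injEq, h]
    · intro j _ hj
      rw [if_neg, mul_zero]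
      intro h
      exact hj (congrArg Prod.fst h).symm
    · intro h; exact absurd (Finset.mem_univ p1) h
  have h2 : ∑ j : ZMod d, C j * (if (p1,p2) = (j + (i:ZMod d), (j : ZMod d)) then (1:ℂ) else 0)
      = (if p1 = p2 + (i:ZMod d) then C p2 else 0) := by
    rw [Finset.sum_eq_single p2]
    · by_cases h : p1 = p2 + (i:ZMod d) <;> simp [Prod.mk.injEq, h]
    · intro j _ hj
      rw [if_neg, mul_zero]
      intro h
      exact hj (congrArg Prod.snd h).symm
    · intro h; exact absurd (Finset.mem_univ p2) h
  calc ∑ j : ZMod d, C j * ((if (p1,p2) = ((j : ZMod d), j + (i : ZMod d)) then (1:ℂ) else 0) +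
        σ * (if (p1,p2) = (j + (i:ZMod d), (j : ZMod d)) then 1 else 0))
      = ∑ j : ZMod d, (C j * (if (p1,p2) = ((j : ZMod d), j + (i : ZMod d)) then (1:ℂ) else 0) +
        σ * (C j * (if (p1,p2) = (j + (i:ZMod d), (j : ZMod d)) then 1 else 0))) := by
        refine Finset.sum_congr rfl fun j _ => by ring
    _ = _ := by
        rw [Finset.sum_add_distrib, h1, ← Finset.mul_sum, h2]

/-- pointwise formula for `cp` -/
lemma cp_apply (t : ℤ) (v : ZMod d × ZMod d → ℂ) (p1 p2 : ZMod d) :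
    cp d t v (p1, p2) =
      (if p2 = p1 + ((|t| : ℤ) : ZMod d) then
        (1/2 : ℂ) * (v (p1, p1 + ((|t| : ℤ) : ZMod d)) +
          (Int.sign t : ℂ) * v (p1 + ((|t| : ℤ) : ZMod d), p1)) else 0) +
      (if 0 ≤ t then (1:ℂ) else -1) *
      (if p1 = p2 + ((|t| : ℤ) : ZMod d) then
        (1/2 : ℂ) * (v (p2, p2 + ((|t| : ℤ) : ZMod d)) +
          (Int.sign t : ℂ) * v (p2 + ((|t| : ℤ) : ZMod d), p2)) else 0) := by
  unfold cp
  by_cases ht : 0 ≤ t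
  · have habs : |t| = t := abs_of_nonneg ht
    rw [habs]
    simp only [if_pos ht, Finset.sum_apply, Pi.smul_apply, smul_eq_mul, symVec]
    rw [sum_scaled_symVec t ((1:ℤ):ℂ)]
    push_cast
    ring
  · have habs : |t| = -t := abs_of_neg (lt_of_not_ge ht)
    rw [habs]
    simp only [if_neg ht, Finset.sum_apply, Pi.smul_apply, smul_eq_mul, symVec]
    rw [sum_scaled_symVec (-t) ((-1:ℤ):ℂ)]
    push_cast
    ring

end Decomp
section Complete
variable {d : ℕ} [NeZero d]
set_option linter.unusedSectionVars false
set_option maxHeartbeats 1000000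

lemma add_self_zero (hd : Odd d) {x : ZMod d} (h : x + x = 0) : x = 0 := by
  have h1 : ((2 * x.val : ℕ) : ZMod d) = 0 := by
    push_cast
    rw [two_mul, ZMod.natCast_val, ZMod.cast_id', id_eq, h]
  have h2 := (ZMod.natCast_eq_zero_iff _ d).mp h1
  obtain ⟨c, hc⟩ := h2
  have hlt := ZMod.val_lt x
  have hodd := Nat.odd_iff.mp hd
  have hv : x.val = 0 := by
    rcases Nat.lt_or_ge c 2 with hcc | hcc
    · interval_cases c <;> omega
    · nlinarith [hc, hlt]
  have := ZMod.natCast_rightInverse (n := d) x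
  rw [← this, hv]
  simp

lemma R_cast_inj (hd : Odd d) {s t : ℤ}
    (hs : s ∈ Finset.Icc (-(((d : ℤ) - 1) / 2)) (((d : ℤ) - 1) / 2))
    (ht : t ∈ Finset.Icc (-(((d : ℤ) - 1) / 2)) (((d : ℤ) - 1) / 2))
    (h : (s : ZMod d) = (t : ZMod d)) : s = t := by
  rw [Finset.mem_Icc] at hs ht
  obtain ⟨m, hm⟩ := hd
  have hdm : (d : ℤ) = 2 * m + 1 := by exact_mod_cast hm
  have hz : ((s - t : ℤ) : ZMod d) = 0 := by push_cast [h]; ring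
  have := intCast_zmod_eq_zero_small (by omega) (by omega) hz
  omega

lemma exists_rep (hd : Odd d) (x : ZMod d) :
    ∃ t, t ∈ Finset.Icc (-(((d : ℤ) - 1) / 2)) (((d : ℤ) - 1) / 2) ∧ (t : ZMod d) = x := by
  obtain ⟨m, hm⟩ := hd
  have hdm : (d : ℤ) = 2 * m + 1 := by exact_mod_cast hm
  have hlt : (x.val : ℤ) < d := by exact_mod_cast ZMod.val_lt x
  have hx : ((x.val : ℤ) : ZMod d) = x := by
    push_cast
    rw [ZMod.natCast_val, ZMod.cast_id', id_eq]
  by_cases h : (x.val : ℤ) ≤ ((d : ℤ) - 1) / 2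
  · exact ⟨(x.val : ℤ), Finset.mem_Icc.mpr ⟨by omega, h⟩, hx⟩
  · refine ⟨(x.val : ℤ) - d, Finset.mem_Icc.mpr ⟨by omega, by omega⟩, ?_⟩
    push_cast
    rw [ZMod.natCast_self, sub_zero]
    rw [ZMod.natCast_val, ZMod.cast_id', id_eq]

lemma cp_sum (hd : Odd d) (v : ZMod d × ZMod d → ℂ) :
    ∑ t ∈ Finset.Icc (-(((d : ℤ) - 1) / 2)) (((d : ℤ) - 1) / 2), cp d t v = v := by
  obtain ⟨m0, hm0⟩ := hd
  have hdm : (d : ℤ) = 2 * m0 + 1 := by exact_mod_cast hm0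
  have hd' : Odd d := ⟨m0, hm0⟩
  funext p
  obtain ⟨p1, p2⟩ := p
  rw [Finset.sum_apply]
  by_cases hpp : p1 = p2
  · subst hpp
    rw [Finset.sum_eq_single_of_mem 0 (Finset.mem_Icc.mpr ⟨by omega, by omega⟩)]
    · rw [cp_apply]
      norm_num
      ring
    · intro t htR htne
      rw [Finset.mem_Icc] at htR
      obtain ⟨ha1, ha2⟩ : -(d:ℤ) < |t| ∧ |t| < d := by
        rcases abs_cases t with ⟨h, _⟩ | ⟨h, _⟩ <;> constructor <;> omega
      have hni : ¬(p1 = p1 + ((|t| : ℤ) : ZMod d)) := by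
        intro h
        have h0 : ((|t| : ℤ) : ZMod d) = 0 := (left_eq_add.mp h)
        have := intCast_zmod_eq_zero_small ha1 ha2 h0
        have := abs_eq_zero.mp this
        exact htne this
      rw [cp_apply, if_neg hni]
      ring
  · have hx : p2 - p1 ≠ 0 := sub_ne_zero.mpr (fun h => hpp h.symm)
    obtain ⟨t0, ht0R, ht0c⟩ := exists_rep hd' (p2 - p1)
    have ht0memIcc := Finset.mem_Icc.mp ht0R
    have ht0ne : t0 ≠ 0 := by
      intro h; apply hx; rw [← ht0c, h]; simp
    have hmem' : -t0 ∈ Finset.Icc (-(((d : ℤ) - 1) / 2)) (((d : ℤ) - 1) / 2) :=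
      Finset.mem_Icc.mpr ⟨by omega, by omega⟩
    have hnegc : ((-t0 : ℤ) : ZMod d) = -(p2 - p1) := by push_cast [ht0c]; ring
    have hzero : ∀ t ∈ Finset.Icc (-(((d : ℤ) - 1) / 2)) (((d : ℤ) - 1) / 2),
        t ≠ t0 ∧ t ≠ -t0 → cp d t v (p1, p2) = 0 := by
      intro t htR ⟨hta, htb⟩
      have htmem := Finset.mem_Icc.mp htR
      have habsR : |t| ∈ Finset.Icc (-(((d : ℤ) - 1) / 2)) (((d : ℤ) - 1) / 2) := by
        refine Finset.mem_Icc.mpr ?_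
        rcases abs_cases t with ⟨h, _⟩ | ⟨h, _⟩ <;> constructor <;> omega
      have hc1 : ¬(p2 = p1 + ((|t| : ℤ) : ZMod d)) := by
        intro h
        have hcast : ((|t| : ℤ) : ZMod d) = ((t0 : ℤ) : ZMod d) := by
          rw [ht0c]; linear_combination -h
        have := R_cast_inj hd' habsR ht0R hcast
        rcases abs_cases t with ⟨he, _⟩ | ⟨he, _⟩ <;> omega
      have hc2 : ¬(p1 = p2 + ((|t| : ℤ) : ZMod d)) := by
        intro h
        have hcast : ((|t| : ℤ) : ZMod d) = ((-t0 : ℤ) : ZMod d) := by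
          rw [hnegc]; linear_combination -h
        have := R_cast_inj hd' habsR hmem' hcast
        rcases abs_cases t with ⟨he, _⟩ | ⟨he, _⟩ <;> omega
      rw [cp_apply, if_neg hc1, if_neg hc2]
      ring
    rw [Finset.sum_eq_add_of_mem t0 (-t0) ht0R hmem' (by omega) hzero]
    have hxx : ¬(p1 = p2 + (p2 - p1)) := by
      intro h
      have : (p2 - p1) + (p2 - p1) = 0 := by linear_combination -h
      exact hx (add_self_zero hd' this)
    have hxx' : ¬(p2 = p1 + -(p2 - p1)) := by
      intro h
      have : (p2 - p1) + (p2 - p1) = 0 := by linear_combination h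
      exact hx (add_self_zero hd' this)
    rcases lt_or_gt_of_ne ht0ne with hneg | hpos
    · have habs : |t0| = -t0 := abs_of_neg hneg
      have habs2 : |(-t0)| = -t0 := by rw [abs_neg]; exact habs
      have hs1 : Int.sign t0 = -1 := Int.sign_eq_neg_one_of_neg hneg
      have hs2 : Int.sign (-t0) = 1 := by rw [Int.sign_neg, hs1]; rfl
      have h0le : ¬(0 ≤ t0) := not_le.mpr hneg
      have h0le2 : (0 : ℤ) ≤ -t0 := by omega
      rw [cp_apply, cp_apply, habs, habs2, hs1, hs2, if_neg h0le, if_pos h0le2, hnegc]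
      have hc2 : p1 = p2 + -(p2 - p1) := by ring
      simp only [eq_false hxx', if_false, eq_true hc2, if_true]
      rw [show p2 + -(p2 - p1) = p1 from by ring]
      push_cast
      ring
    · have habs : |t0| = t0 := abs_of_nonneg (le_of_lt hpos)
      have habs2 : |(-t0)| = t0 := by rw [abs_neg]; exact habs
      have hs1 : Int.sign t0 = 1 := Int.sign_eq_one_of_pos hpos
      have hs2 : Int.sign (-t0) = -1 := by rw [Int.sign_neg, hs1]
      have h0le : (0 : ℤ) ≤ t0 := le_of_lt hpos
      have h0le2 : ¬((0:ℤ) ≤ -t0) := by omega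
      rw [cp_apply, cp_apply, habs, habs2, hs1, hs2, if_pos h0le, if_neg h0le2, ht0c]
      have hc1 : p2 = p1 + (p2 - p1) := by ring
      simp only [eq_true hc1, if_true, eq_false hxx, if_false]
      rw [show p1 + (p2 - p1) = p2 from by ring]
      push_cast
      ring

end Complete
section DiagForm
variable {d : ℕ} [NeZero d]
set_option linter.unusedSectionVars false
set_option maxHeartbeats 1000000

lemma sum_diag_reduce (w : ZMod d × ZMod d → ℂ)
    (hw : ∀ p : ZMod d × ZMod d, p.1 ≠ p.2 → w p = 0) (G : ZMod d × ZMod d → ℂ) :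
    ∑ q : ZMod d × ZMod d, G q * w q = ∑ l : ZMod d, G (l, l) * w (l, l) := by
  rw [Fintype.sum_prod_type]
  refine Finset.sum_congr rfl fun q1 _ => ?_
  rw [Finset.sum_eq_single q1]
  · intro q2 _ hq
    rw [hw (q1, q2) (Ne.symm hq), mul_zero]
  · intro h; exact absurd (Finset.mem_univ q1) h

lemma sum_diag_reduce_left (v : ZMod d × ZMod d → ℂ)
    (hv : ∀ p : ZMod d × ZMod d, p.1 ≠ p.2 → v p = 0) (F : ZMod d × ZMod d → ℂ) :
    ∑ p : ZMod d × ZMod d, star (v p) * F p = ∑ j : ZMod d, star (v (j, j)) * F (j, j) := by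
  rw [Fintype.sum_prod_type]
  refine Finset.sum_congr rfl fun q1 _ => ?_
  rw [Finset.sum_eq_single q1]
  · intro q2 _ hq
    rw [hv (q1, q2) (Ne.symm hq), star_zero, zero_mul]
  · intro h; exact absurd (Finset.mem_univ q1) h

lemma dotc_diag {v w : ZMod d × ZMod d → ℂ}
    (hv : ∀ p : ZMod d × ZMod d, p.1 ≠ p.2 → v p = 0)
    (hw : ∀ p : ZMod d × ZMod d, p.1 ≠ p.2 → w p = 0) :
    dotc v w = ∑ j : ZMod d, star (v (j, j)) * w (j, j) :=
  sum_diag_reduce_left v hv w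

lemma ww_sq (a c : ℤ) : ww d ^ (a * c) * ww d ^ (a * c) = ww d ^ (2 * a * c) := by
  rw [← zpow_add₀ (ww_ne_zero d)]
  congr 1
  ring

lemma dotc_TT_diag (a : ℤ × ℤ) {v w : ZMod d × ZMod d → ℂ}
    (hv : ∀ p : ZMod d × ZMod d, p.1 ≠ p.2 → v p = 0)
    (hw : ∀ p : ZMod d × ZMod d, p.1 ≠ p.2 → w p = 0) :
    dotc v ((TT d a).mulVec w) = tt d ^ (a.1 * a.2) * tt d ^ (a.1 * a.2) *
      ∑ l : ZMod d, star (v (l + (a.1 : ZMod d), l + (a.1 : ZMod d))) * w (l, l) *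
        ww d ^ (2 * a.2 * (l.val : ℤ)) := by
  have hTTw : ∀ j : ZMod d, (TT d a).mulVec w (j, j) = ∑ l : ZMod d, TT d a (j, j) (l, l) * w (l, l) :=
    fun j => sum_diag_reduce w hw (TT d a (j, j))
  unfold dotc
  rw [sum_diag_reduce_left v hv]
  simp only [hTTw]
  calc ∑ j : ZMod d, star (v (j, j)) * ∑ l : ZMod d, TT d a (j, j) (l, l) * w (l, l)
      = ∑ j : ZMod d, ∑ l : ZMod d, star (v (j, j)) * (TT d a (j, j) (l, l) * w (l, l)) :=
        Finset.sum_congr rfl fun j _ => Finset.mul_sum _ _ _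
    _ = ∑ l : ZMod d, ∑ j : ZMod d, star (v (j, j)) * (TT d a (j, j) (l, l) * w (l, l)) :=
        Finset.sum_comm
    _ = ∑ l : ZMod d, star (v (l + (a.1 : ZMod d), l + (a.1 : ZMod d))) *
          (TT d a (l + (a.1 : ZMod d), l + (a.1 : ZMod d)) (l, l) * w (l, l)) := by
        refine Finset.sum_congr rfl fun l _ => ?_
        rw [Finset.sum_eq_single (l + (a.1 : ZMod d))]
        · intro j _ hj
          have hz : TT d a (j, j) (l, l) = 0 := by
            show T d a j l * T d a j l = 0
            unfold T
            rw [Matrix.of_apply, if_neg hj]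
            ring
          rw [hz, zero_mul, mul_zero]
        · intro h; exact absurd (Finset.mem_univ _) h
    _ = tt d ^ (a.1 * a.2) * tt d ^ (a.1 * a.2) *
      ∑ l : ZMod d, star (v (l + (a.1 : ZMod d), l + (a.1 : ZMod d))) * w (l, l) *
        ww d ^ (2 * a.2 * (l.val : ℤ)) := by
        rw [Finset.mul_sum]
        refine Finset.sum_congr rfl fun l _ => ?_
        have he : TT d a (l + (a.1 : ZMod d), l + (a.1 : ZMod d)) (l, l) =
            (tt d ^ (a.1 * a.2) * ww d ^ (a.2 * (l.val : ℤ))) *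
            (tt d ^ (a.1 * a.2) * ww d ^ (a.2 * (l.val : ℤ))) := by
          show T d a (l + (a.1 : ZMod d)) l * T d a (l + (a.1 : ZMod d)) l = _
          unfold T
          rw [Matrix.of_apply, if_pos rfl]
        rw [he, ← ww_sq a.2 (l.val : ℤ)]
        ring

lemma TT_zero_one (a : Fin d × Fin d) (h1 : (a.1 : ℕ) = 0) (h2 : (a.2 : ℕ) = 0) :
    TT d (fz a) = 1 := by
  have hfz : fz a = ((0 : ℤ), (0 : ℤ)) := by
    unfold fz
    rw [h1, h2]
    simp
  rw [hfz]
  ext p q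
  obtain ⟨p1, p2⟩ := p
  obtain ⟨q1, q2⟩ := q
  show T d (0, 0) p1 q1 * T d (0, 0) p2 q2 = _
  unfold T
  rw [Matrix.one_apply]
  simp only [Matrix.of_apply]
  norm_num
  split_ifs <;> tauto

end DiagForm
section Fourier
variable {d : ℕ} [NeZero d]
set_option linter.unusedSectionVars false
set_option maxHeartbeats 1000000

lemma fourier_forward (hd : Odd d) (M : ZMod d → ZMod d → ℂ)
    (hS : ∀ n1 n2 : ℕ, n1 < d → n2 < d →
      ∑ l : ZMod d, M (l + ((n1 : ℕ) : ZMod d)) l * ww d ^ (2 * (n2:ℤ) * (l.val:ℤ)) =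
        if n1 = 0 ∧ n2 = 0 then 1 else 0) :
    ∀ j l : ZMod d, M j l = if j = l then (d:ℂ)⁻¹ else 0 := by
  intro j l
  have hd0 : (0:ℕ) < d := Nat.pos_of_ne_zero (NeZero.ne d)
  set n1 := (j - l).val with hn1
  have hn1lt : n1 < d := ZMod.val_lt (j - l)
  have hcast : ((n1 : ℕ) : ZMod d) = j - l := ZMod.natCast_rightInverse (j - l)
  have key : ∀ k : ℕ, k < d →
      ∑ l' : ZMod d, M (l' + (j - l)) l' * ww d ^ (2 * (k:ℤ) * (l'.val:ℤ)) =
        if n1 = 0 ∧ k = 0 then 1 else 0 := by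
    intro k hk
    have := hS n1 k hn1lt hk
    rw [hcast] at this
    exact this
  have heval1 : ∑ k ∈ Finset.range d, ww d ^ (2 * (k:ℤ) * (-(l.val:ℤ))) *
      (∑ l' : ZMod d, M (l' + (j - l)) l' * ww d ^ (2 * (k:ℤ) * (l'.val:ℤ)))
      = M j l * d := by
    calc ∑ k ∈ Finset.range d, ww d ^ (2 * (k:ℤ) * (-(l.val:ℤ))) *
        (∑ l' : ZMod d, M (l' + (j - l)) l' * ww d ^ (2 * (k:ℤ) * (l'.val:ℤ)))
        = ∑ k ∈ Finset.range d, ∑ l' : ZMod d, M (l' + (j - l)) l' *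
            ww d ^ (2 * ((l'.val:ℤ) - (l.val:ℤ)) * (k:ℤ)) := by
          refine Finset.sum_congr rfl fun k _ => ?_
          rw [Finset.mul_sum]
          refine Finset.sum_congr rfl fun l' _ => ?_
          rw [show ww d ^ (2 * (k:ℤ) * (-(l.val:ℤ))) * (M (l' + (j - l)) l' * ww d ^ (2 * (k:ℤ) * (l'.val:ℤ)))
            = M (l' + (j - l)) l' * (ww d ^ (2 * (k:ℤ) * (l'.val:ℤ)) * ww d ^ (2 * (k:ℤ) * (-(l.val:ℤ)))) from by ring]
          rw [← zpow_add₀ (ww_ne_zero d)]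
          congr 2
          ring
      _ = ∑ l' : ZMod d, ∑ k ∈ Finset.range d, M (l' + (j - l)) l' *
            ww d ^ (2 * ((l'.val:ℤ) - (l.val:ℤ)) * (k:ℤ)) := Finset.sum_comm
      _ = ∑ l' : ZMod d, M (l' + (j - l)) l' *
            (if (d:ℤ) ∣ ((l'.val:ℤ) - (l.val:ℤ)) then (d:ℂ) else 0) := by
          refine Finset.sum_congr rfl fun l' _ => ?_
          rw [← Finset.mul_sum, char_sum_range hd]
      _ = M j l * d := by
          rw [Finset.sum_eq_single l]
          · rw [show l + (j - l) = j from by ring, if_pos (by simp)]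
          · intro l' _ hne
            rw [if_neg, mul_zero]
            intro hdvd
            have hv1 : (l'.val : ℤ) < d := by exact_mod_cast ZMod.val_lt l'
            have hv2 : (l.val : ℤ) < d := by exact_mod_cast ZMod.val_lt l
            have hv3 : (0:ℤ) ≤ (l'.val:ℤ) := Int.natCast_nonneg _
            have hv4 : (0:ℤ) ≤ (l.val:ℤ) := Int.natCast_nonneg _
            have h0 := Int.eq_zero_of_abs_lt_dvd hdvd (abs_lt.mpr ⟨by omega, by omega⟩)
            have hvv : l'.val = l.val := by omega
            exact hne (ZMod.val_injective d hvv)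
          · intro h; exact absurd (Finset.mem_univ l) h
  have heval2 : ∑ k ∈ Finset.range d, ww d ^ (2 * (k:ℤ) * (-(l.val:ℤ))) *
      (∑ l' : ZMod d, M (l' + (j - l)) l' * ww d ^ (2 * (k:ℤ) * (l'.val:ℤ)))
      = if n1 = 0 then 1 else 0 := by
    rw [Finset.sum_congr rfl (fun k hk => by
      rw [key k (Finset.mem_range.mp hk)])]
    rw [Finset.sum_eq_single 0]
    · norm_num
    · intro k _ hk
      rw [if_neg (fun h => hk h.2), mul_zero]
    · intro h; exact absurd (Finset.mem_range.mpr hd0) h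
  have hMd : M j l * d = if n1 = 0 then 1 else 0 := by rw [← heval1, heval2]
  have hn1iff : n1 = 0 ↔ j = l := by
    rw [hn1, ZMod.val_eq_zero, sub_eq_zero]
  have hdc : (d:ℂ) ≠ 0 := Nat.cast_ne_zero.mpr (NeZero.ne d)
  by_cases hjl : j = l
  · rw [if_pos hjl]
    rw [if_pos (hn1iff.mpr hjl)] at hMd
    field_simp at hMd ⊢
    linear_combination hMd
  · rw [if_neg hjl]
    rw [if_neg (fun h => hjl (hn1iff.mp h))] at hMd
    exact (mul_eq_zero.mp hMd).resolve_right hdc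

end Fourier
section Flip
variable {d : ℕ} [NeZero d]
set_option linter.unusedSectionVars false
set_option maxHeartbeats 1000000

lemma rep_spec (hd : Odd d) : ∃ rep : ZMod d → ℤ,
    (∀ c, rep c ∈ Finset.Icc (-(((d : ℤ) - 1) / 2)) (((d : ℤ) - 1) / 2)) ∧
    (∀ c, ((rep c : ℤ) : ZMod d) = c) := by
  have h := fun c : ZMod d => exists_rep hd c
  choose rep hmem hcast using h
  exact ⟨rep, hmem, hcast⟩

lemma smul_one_entry (c c' : ZMod d) :
    ((d:ℂ)⁻¹ • (1 : Matrix (ZMod d) (ZMod d) ℂ)) c c' = if c = c' then (d:ℂ)⁻¹ else 0 := by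
  rw [Matrix.smul_apply, Matrix.one_apply, smul_eq_mul]
  split_ifs <;> ring

lemma scaled_comm {W A : Matrix (ZMod d) (ZMod d) ℂ}
    (h : W * A = (d:ℂ)⁻¹ • 1) : A * W = (d:ℂ)⁻¹ • 1 := by
  have hdc : (d:ℂ) ≠ 0 := Nat.cast_ne_zero.mpr (NeZero.ne d)
  have h1 : W * ((d:ℂ) • A) = 1 := by
    rw [Matrix.mul_smul, h, smul_smul, mul_inv_cancel₀ hdc, one_smul]
  have h2 : ((d:ℂ) • A) * W = 1 := mul_eq_one_comm.mp h1
  have h3 : (d:ℂ) • (A * W) = 1 := by rw [← Matrix.smul_mul]; exact h2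
  calc A * W = (d:ℂ)⁻¹ • ((d:ℂ) • (A * W)) := by
        rw [smul_smul, inv_mul_cancel₀ hdc, one_smul]
    _ = (d:ℂ)⁻¹ • 1 := by rw [h3]

lemma flip_fwd (hd : Odd d) (u : ℤ → ZMod d → ℂ)
    (hG : ∀ s ∈ Finset.Icc (-(((d : ℤ) - 1) / 2)) (((d : ℤ) - 1) / 2),
      ∀ t ∈ Finset.Icc (-(((d : ℤ) - 1) / 2)) (((d : ℤ) - 1) / 2),
      ∑ j : ZMod d, star (u s j) * u t j = if s = t then (d:ℂ)⁻¹ else 0) :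
    ∀ j l : ZMod d, ∑ t ∈ Finset.Icc (-(((d : ℤ) - 1) / 2)) (((d : ℤ) - 1) / 2),
      star (u t j) * u t l = if j = l then (d:ℂ)⁻¹ else 0 := by
  obtain ⟨rep, hmem, hcast⟩ := rep_spec hd
  have hrepinj : ∀ c c', rep c = rep c' → c = c' := by
    intro c c' h
    rw [← hcast c, ← hcast c', h]
  have hrept : ∀ t ∈ Finset.Icc (-(((d : ℤ) - 1) / 2)) (((d : ℤ) - 1) / 2),
      rep ((t : ℤ) : ZMod d) = t := fun t ht => R_cast_inj hd (hmem _) ht (hcast _)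
  have hsum : ∀ f : ℤ → ℂ, ∑ c : ZMod d, f (rep c) =
      ∑ t ∈ Finset.Icc (-(((d : ℤ) - 1) / 2)) (((d : ℤ) - 1) / 2), f t := by
    intro f
    apply Finset.sum_bij (fun (c : ZMod d) _ => rep c)
    · intro c _; exact hmem c
    · intro c _ c' _ h; exact hrepinj c c' h
    · intro t ht; exact ⟨((t : ℤ) : ZMod d), Finset.mem_univ _, hrept t ht⟩
    · intro c _; rfl
  set W : Matrix (ZMod d) (ZMod d) ℂ := Matrix.of fun c j => u (rep c) j with hW
  have hWWH : W * Wᴴ = (d:ℂ)⁻¹ • 1 := by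
    ext c c'
    rw [Matrix.mul_apply, smul_one_entry]
    have : ∑ j : ZMod d, W c j * Wᴴ j c' = ∑ j : ZMod d, star (u (rep c') j) * u (rep c) j := by
      refine Finset.sum_congr rfl fun j _ => ?_
      rw [Matrix.conjTranspose_apply]
      show u (rep c) j * star (u (rep c') j) = _
      ring
    rw [this, hG (rep c') (hmem _) (rep c) (hmem _)]
    have : (rep c' = rep c) ↔ (c = c') := by
      constructor
      · intro h; exact (hrepinj _ _ h).symm
      · intro h; rw [h]
    rw [if_congr this rfl rfl]
  have hWHW : Wᴴ * W = (d:ℂ)⁻¹ • 1 := scaled_comm hWWH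
  intro j l
  have : ∑ t ∈ Finset.Icc (-(((d : ℤ) - 1) / 2)) (((d : ℤ) - 1) / 2), star (u t j) * u t l
      = (Wᴴ * W) j l := by
    rw [Matrix.mul_apply, ← hsum (fun t => star (u t j) * u t l)]
    refine Finset.sum_congr rfl fun c _ => ?_
    rw [Matrix.conjTranspose_apply]
    rfl
  rw [this, hWHW, smul_one_entry]

lemma flip_bwd (hd : Odd d) (u : ℤ → ZMod d → ℂ)
    (hM : ∀ j l : ZMod d, ∑ t ∈ Finset.Icc (-(((d : ℤ) - 1) / 2)) (((d : ℤ) - 1) / 2),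
      star (u t j) * u t l = if j = l then (d:ℂ)⁻¹ else 0) :
    ∀ s ∈ Finset.Icc (-(((d : ℤ) - 1) / 2)) (((d : ℤ) - 1) / 2),
      ∀ t ∈ Finset.Icc (-(((d : ℤ) - 1) / 2)) (((d : ℤ) - 1) / 2),
      ∑ j : ZMod d, star (u s j) * u t j = if s = t then (d:ℂ)⁻¹ else 0 := by
  obtain ⟨rep, hmem, hcast⟩ := rep_spec hd
  have hrepinj : ∀ c c', rep c = rep c' → c = c' := by
    intro c c' h
    rw [← hcast c, ← hcast c', h]
  have hrept : ∀ t ∈ Finset.Icc (-(((d : ℤ) - 1) / 2)) (((d : ℤ) - 1) / 2),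
      rep ((t : ℤ) : ZMod d) = t := fun t ht => R_cast_inj hd (hmem _) ht (hcast _)
  have hsum : ∀ f : ℤ → ℂ, ∑ c : ZMod d, f (rep c) =
      ∑ t ∈ Finset.Icc (-(((d : ℤ) - 1) / 2)) (((d : ℤ) - 1) / 2), f t := by
    intro f
    apply Finset.sum_bij (fun (c : ZMod d) _ => rep c)
    · intro c _; exact hmem c
    · intro c _ c' _ h; exact hrepinj c c' h
    · intro t ht; exact ⟨((t : ℤ) : ZMod d), Finset.mem_univ _, hrept t ht⟩
    · intro c _; rfl
  set W : Matrix (ZMod d) (ZMod d) ℂ := Matrix.of fun c j => u (rep c) j with hW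
  have hWHW : Wᴴ * W = (d:ℂ)⁻¹ • 1 := by
    ext j l
    rw [Matrix.mul_apply, smul_one_entry, ← hM j l, ← hsum (fun t => star (u t j) * u t l)]
    refine Finset.sum_congr rfl fun c _ => ?_
    rw [Matrix.conjTranspose_apply]
    rfl
  have hWWH : W * Wᴴ = (d:ℂ)⁻¹ • 1 := scaled_comm hWHW
  intro s hs t ht
  have h1 : ∑ j : ZMod d, star (u s j) * u t j = (W * Wᴴ) ((t:ℤ) : ZMod d) ((s:ℤ) : ZMod d) := by
    rw [Matrix.mul_apply]
    refine Finset.sum_congr rfl fun j _ => ?_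
    rw [Matrix.conjTranspose_apply]
    show star (u s j) * u t j = W ((t:ℤ):ZMod d) j * star (W ((s:ℤ):ZMod d) j)
    rw [hW]
    show star (u s j) * u t j = u (rep ((t:ℤ):ZMod d)) j * star (u (rep ((s:ℤ):ZMod d)) j)
    rw [hrept t ht, hrept s hs]
    ring
  rw [h1, hWWH, smul_one_entry]
  have : (((t:ℤ) : ZMod d) = ((s:ℤ) : ZMod d)) ↔ (s = t) := by
    constructor
    · intro h; exact (R_cast_inj hd ht hs h).symm
    · intro h; rw [h]
  rw [if_congr this rfl rfl]

end Flip
section MainHelpers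
variable {d : ℕ} [NeZero d]
set_option linter.unusedSectionVars false

lemma mulVec_sum' {β : Type*} (M : Matrix (ZMod d × ZMod d) (ZMod d × ZMod d) ℂ)
    (s : Finset β) (f : β → (ZMod d × ZMod d → ℂ)) :
    M.mulVec (∑ i ∈ s, f i) = ∑ i ∈ s, M.mulVec (f i) := by
  classical
  induction s using Finset.induction_on with
  | empty => simp [Matrix.mulVec_zero]
  | insert _ _ h ih => rw [Finset.sum_insert h, Finset.sum_insert h, Matrix.mulVec_add, ih]

end MainHelpers

set_option maxHeartbeats 2000000 in
theorem stmt17 (d : ℕ) [NeZero d] (hd : Odd d)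
    (P K : ℤ → Matrix (ZMod d × ZMod d) (ZMod d × ZMod d) ℂ)
    (hP : ∀ t ∈ Finset.Icc (-(((d : ℤ) - 1) / 2)) (((d : ℤ) - 1) / 2),
      (P t)ᴴ = P t ∧ P t * P t = P t ∧
      LinearMap.range (Matrix.mulVecLin (P t)) = Hodd d t)
    (hK : ∀ t ∈ Finset.Icc (-(((d : ℤ) - 1) / 2)) (((d : ℤ) - 1) / 2),
      (K t)ᴴ = K t ∧ K t * K t = 1 ∧
      (∀ a : Fin d × Fin d, K t * TT d (fz a) = TT d (fz a) * K t) ∧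
      (∀ v ∈ Hodd d t, (K t).mulVec v ∈ Hodd d 0) ∧
      (∀ v ∈ Hodd d 0, (K t).mulVec v ∈ Hodd d t) ∧
      (∀ v : ZMod d × ZMod d → ℂ,
        (∀ w ∈ Hodd d t ⊔ Hodd d 0, dotc w v = 0) → (K t).mulVec v = v))
    (b : ZMod d × ZMod d → ℂ) (hb : dotc b b = 1) :
    IsWHFiducial d b ↔
      ∀ s ∈ Finset.Icc (-(((d : ℤ) - 1) / 2)) (((d : ℤ) - 1) / 2), ∀ t ∈ Finset.Icc (-(((d : ℤ) - 1) / 2)) (((d : ℤ) - 1) / 2),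
        dotc ((K s * P s).mulVec b) ((K t * P t).mulVec b) =
          if s = t then (d : ℂ)⁻¹ else 0 := by
  classical
  set R := Finset.Icc (-(((d : ℤ) - 1) / 2)) (((d : ℤ) - 1) / 2) with hR
  have hd0 : 0 < d := Nat.pos_of_ne_zero (NeZero.ne d)
  -- P acts as the explicit component map on b
  have hPb : ∀ t ∈ R, (P t).mulVec b = cp d t b := by
    intro t htR
    obtain ⟨hPH, hPP, hPr⟩ := hP t htR
    conv_lhs => rw [← cp_sum hd b]
    rw [mulVec_sum']
    rw [Finset.sum_eq_single_of_mem t htR]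
    · exact proj_fix hPP hPr (cp d t b) (cp_mem t b)
    · intro s hsR hst
      exact proj_kill hd hPH hPP hPr hsR htR hst (cp d s b) (cp_mem s b)
  have hv : ∀ t ∈ R, (K t * P t).mulVec b = (K t).mulVec (cp d t b) := by
    intro t ht
    rw [← Matrix.mulVec_mulVec, hPb t ht]
  have hvmem : ∀ t ∈ R, (K t * P t).mulVec b ∈ Hodd d 0 := by
    intro t ht
    obtain ⟨hKH, hKK, hKTT, hKto0, hK0to, hKid⟩ := hK t ht
    rw [hv t ht]
    exact hKto0 _ (cp_mem t b)
  have hvdiag : ∀ t ∈ R, ∀ p : ZMod d × ZMod d, p.1 ≠ p.2 → (K t * P t).mulVec b p = 0 :=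
    fun t ht => Hodd_zero_diag (hvmem t ht)
  -- the chain identity
  have hchain : ∀ a : Fin d × Fin d, dotc b ((TT d (fz a)).mulVec b) =
      ∑ t ∈ R, dotc ((K t * P t).mulVec b) ((TT d (fz a)).mulVec ((K t * P t).mulVec b)) := by
    intro a
    have hb' : b = ∑ t ∈ R, cp d t b := (cp_sum hd b).symm
    calc dotc b ((TT d (fz a)).mulVec b)
        = ∑ s ∈ R, ∑ t ∈ R, dotc (cp d s b) ((TT d (fz a)).mulVec (cp d t b)) := by
          conv_lhs => rw [hb']
          rw [mulVec_sum', dotc_sum_left]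
          refine Finset.sum_congr rfl fun s _ => ?_
          rw [dotc_sum_right]
      _ = ∑ t ∈ R, dotc (cp d t b) ((TT d (fz a)).mulVec (cp d t b)) := by
          refine Finset.sum_congr rfl fun s hsR => ?_
          rw [Finset.sum_eq_single_of_mem s hsR]
          · intro t htR hts
            exact Hodd_orth hd hsR htR (Ne.symm hts) (cp_mem s b)
              (Hodd_TT_invariant (fz a) t _ (cp_mem t b))
      _ = ∑ t ∈ R, dotc ((K t * P t).mulVec b) ((TT d (fz a)).mulVec ((K t * P t).mulVec b)) := by
          refine Finset.sum_congr rfl fun t htR => ?_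
          obtain ⟨hKH, hKK, hKTT, hKto0, hK0to, hKid⟩ := hK t htR
          rw [hv t htR]
          rw [show (TT d (fz a)).mulVec ((K t).mulVec (cp d t b)) =
              (K t).mulVec ((TT d (fz a)).mulVec (cp d t b)) from by
            rw [Matrix.mulVec_mulVec, Matrix.mulVec_mulVec, hKTT a]]
          rw [dotc_mulVec_left, hKH, Matrix.mulVec_mulVec, hKK, Matrix.one_mulVec]
  -- the frame operator on the diagonal
  set M : ZMod d → ZMod d → ℂ := fun j l =>
    ∑ t ∈ R, star ((K t * P t).mulVec b (j, j)) * ((K t * P t).mulVec b (l, l)) with hM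
  have hexp : ∀ a : Fin d × Fin d, dotc b ((TT d (fz a)).mulVec b) =
      tt d ^ ((fz a).1 * (fz a).2) * tt d ^ ((fz a).1 * (fz a).2) *
      ∑ l : ZMod d, M (l + ((fz a).1 : ZMod d)) l * ww d ^ (2 * (fz a).2 * (l.val : ℤ)) := by
    intro a
    rw [hchain a]
    rw [Finset.sum_congr rfl (fun t ht => dotc_TT_diag (fz a) (hvdiag t ht) (hvdiag t ht))]
    rw [← Finset.mul_sum]
    congr 1
    rw [Finset.sum_comm]
    refine Finset.sum_congr rfl fun l _ => ?_
    simp only [hM]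
    rw [Finset.sum_mul]
  have hdc : (d:ℂ) ≠ 0 := Nat.cast_ne_zero.mpr (NeZero.ne d)
  have hτ : ∀ e : ℤ, tt d ^ e ≠ 0 := fun e => zpow_ne_zero e (tt_ne_zero d)
  constructor
  · -- forward
    rintro ⟨hb1, hzero⟩
    have hSfull : ∀ n1 n2 : ℕ, n1 < d → n2 < d →
        ∑ l : ZMod d, M (l + ((n1 : ℕ) : ZMod d)) l * ww d ^ (2 * (n2:ℤ) * (l.val:ℤ)) =
          if n1 = 0 ∧ n2 = 0 then 1 else 0 := by
      intro n1 n2 h1 h2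
      have hexpa := hexp (⟨n1, h1⟩, ⟨n2, h2⟩)
      set a : Fin d × Fin d := (⟨n1, h1⟩, ⟨n2, h2⟩) with ha
      have hfz1 : (fz a).1 = ((n1 : ℕ) : ℤ) := rfl
      have hfz2 : (fz a).2 = ((n2 : ℕ) : ℤ) := rfl
      rw [hfz1, hfz2] at hexpa
      simp only [Int.cast_natCast] at hexpa
      by_cases h0 : n1 = 0 ∧ n2 = 0
      · rw [if_pos h0]
        rw [TT_zero_one a h0.1 h0.2, Matrix.one_mulVec, hb1] at hexpa
        have he : ((n1:ℕ):ℤ) * ((n2:ℕ):ℤ) = 0 := by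
          rw [h0.1, h0.2]; simp
        rw [he, zpow_zero] at hexpa
        linear_combination -hexpa
      · rw [if_neg h0]
        have hane : ((a.1 : ℕ), (a.2 : ℕ)) ≠ ((0:ℕ), (0:ℕ)) := by
          intro hc
          rw [Prod.mk.injEq] at hc
          exact h0 ⟨hc.1, hc.2⟩
        have hz := hzero a hane
        rw [hz] at hexpa
        exact ((mul_eq_zero.mp hexpa.symm).resolve_left (mul_ne_zero (hτ _) (hτ _)))
    have hMval := fourier_forward hd M hSfull
    intro s hs t ht
    rw [dotc_diag (hvdiag s hs) (hvdiag t ht)]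
    exact flip_bwd hd (fun t j => (K t * P t).mulVec b (j, j))
      (fun j l => hMval j l) s hs t ht
  · -- backward
    intro hGram
    refine ⟨hb, ?_⟩
    intro a hane
    rw [hexp a]
    have hu := flip_fwd hd (fun t j => (K t * P t).mulVec b (j, j)) (by
      intro s hs t ht
      rw [← dotc_diag (hvdiag s hs) (hvdiag t ht)]
      exact hGram s hs t ht)
    have hMval : ∀ j l, M j l = if j = l then (d:ℂ)⁻¹ else 0 := fun j l => hu j l
    have hane' : ¬((a.1 : ℕ) = 0 ∧ (a.2 : ℕ) = 0) := by
      intro hc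
      exact hane (by rw [hc.1, hc.2])
    have hSig : ∑ l : ZMod d, M (l + ((fz a).1 : ZMod d)) l * ww d ^ (2 * (fz a).2 * (l.val : ℤ)) = 0 := by
      by_cases hn1 : (a.1 : ℕ) = 0
      · have hn2 : (a.2 : ℕ) ≠ 0 := fun h => hane' ⟨hn1, h⟩
        have hzero1 : ((fz a).1 : ZMod d) = 0 := by
          show (((a.1 : ℕ) : ℤ) : ZMod d) = 0
          rw [hn1]; simp
        rw [hzero1]
        have : ∀ l : ZMod d, M (l + 0) l = (d:ℂ)⁻¹ := by
          intro l
          rw [add_zero, hMval l l, if_pos rfl]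
        rw [Finset.sum_congr rfl (fun l _ => by rw [this l])]
        rw [← Finset.mul_sum]
        have hcs : ∑ l : ZMod d, ww d ^ (2 * (fz a).2 * (l.val:ℤ)) = 0 := by
          rw [show (fz a).2 = ((a.2 : ℕ) : ℤ) from rfl]
          rw [char_sum_zmod hd ((a.2 : ℕ) : ℤ)]
          rw [if_neg]
          intro hdvd
          have hlt : |((a.2 : ℕ) : ℤ)| < (d : ℤ) := by
            rw [abs_of_nonneg (Int.natCast_nonneg _)]
            exact_mod_cast a.2.isLt
          have := Int.eq_zero_of_abs_lt_dvd hdvd hlt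
          exact hn2 (by exact_mod_cast this)
        rw [hcs, mul_zero]
      · have hzero1 : ((fz a).1 : ZMod d) ≠ 0 := by
          show (((a.1 : ℕ) : ℤ) : ZMod d) ≠ 0
          intro hc
          rw [Int.cast_natCast] at hc
          have := (ZMod.natCast_eq_zero_iff _ d).mp hc
          have := Nat.le_of_dvd (Nat.pos_of_ne_zero hn1) this
          have := a.1.isLt
          omega
        have : ∀ l : ZMod d, M (l + ((fz a).1 : ZMod d)) l = 0 := by
          intro l
          rw [hMval, if_neg]
          intro hc
          exact hzero1 (by
            have : l + ((fz a).1 : ZMod d) = l + 0 := by rw [hc, add_zero]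
            exact add_left_cancel this)
        rw [Finset.sum_congr rfl (fun l _ => by rw [this l, zero_mul])]
        simp
    rw [hSig, mul_zero]
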